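/- Let ρ satisfy ρ³ + ρ² − 4ρ + 1 = 0 and work in K = ℚ(ρ). Define F(x,y) = x⁴ + ρx³y + (ρ²+ρ−1)x²y² + ρxy³ + y⁴, G(x,y) = x + y, H(x,y) = x² + (1/5)(−2ρ² + 8)xy + y², and d = 1/(4ρ²). Then the identity (1 + d)·H(x,y)² = F(x,y) + d·G(x,y)⁴ holds in K[x,y]. -/

import Mathlib

/-- With `ρ` a root of `t³ + t² − 4t + 1`, setting
`F = x⁴ + ρx³y + (ρ²+ρ−1)x²y² + ρxy³ + y⁴`, `G = x + y`,
`H = x² + (1/5)(−2ρ² + 8)xy + y²` and `d = 1/(4ρ²)`, we have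
`(1 + d)·H² = F + d·G⁴`. -/
theorem FGH_identity
    {K : Type*} [Field K] [CharZero K] (ρ : K)
    (hρ : ρ ^ 3 + ρ ^ 2 - 4 * ρ + 1 = 0) (x y : K) :
    (1 + 1 / (4 * ρ ^ 2)) * (x ^ 2 + (1 / 5) * (-2 * ρ ^ 2 + 8) * x * y + y ^ 2) ^ 2 =
      (x ^ 4 + ρ * x ^ 3 * y + (ρ ^ 2 + ρ - 1) * x ^ 2 * y ^ 2 + ρ * x * y ^ 3 + y ^ 4)
        + (1 / (4 * ρ ^ 2)) * (x + y) ^ 4 := by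
  have h0 : ρ ≠ 0 := by intro h; rw [h] at hρ; norm_num at hρ
  field_simp
  linear_combination ((-20 - 80 * ρ) * (x ^ 3 * y + x * y ^ 3)
    + (-36 - 144 * ρ - 16 * ρ ^ 2 + 16 * ρ ^ 3) * x ^ 2 * y ^ 2) * hρ
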